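/- arXiv:1107.5541 — 6 statements merged into one kernel-verified Lean document; each statement's English description precedes it below -/
import Mathlib

section
/- Any nonzero 2×2 Hermitian positive semidefinite matrix Q with trace at most 1 can be written as Q = x·e₁e₁† + (1−x)·uu†, where e₁ = [1,0]ᵀ, x is a real number with 0 ≤ x < 1, and u is a nonzero 2×1 complex vector with u†u ≤ 1. -/
open Matrix
open scoped ComplexOrder

theorem stmt_0 (Q : Matrix (Fin 2) (Fin 2) ℂ)
    (hQ : Q.PosSemidef) (hQ0 : Q ≠ 0) (htr : Q.trace.re ≤ 1) :
    ∃ (x : ℝ) (u : Fin 2 → ℂ), 0 ≤ x ∧ x < 1 ∧ u ≠ 0 ∧ (star u ⬝ᵥ u).re ≤ 1 ∧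
      Q = (x : ℂ) • !![1, 0; 0, 0] + ((1 - x : ℝ) : ℂ) • vecMulVec u (star u) := by
  set a := (Q 0 0).re with ha_def
  set c := (Q 1 1).re with hc_def
  set b := Q 0 1 with hb_def
  have ha0 : Q 0 0 = (a : ℂ) := (Complex.conj_eq_iff_re.mp (hQ.1.apply 0 0)).symm
  have hc0 : Q 1 1 = (c : ℂ) := (Complex.conj_eq_iff_re.mp (hQ.1.apply 1 1)).symm
  have hb0 : Q 1 0 = starRingEnd ℂ b := (hQ.1.apply 1 0).symm
  have key : ∀ z w : ℂ, 0 ≤ ((starRingEnd ℂ z) * ((a:ℂ) * z + b * w)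
      + (starRingEnd ℂ w) * ((starRingEnd ℂ b) * z + (c:ℂ) * w)).re := by
    intro z w
    have h := hQ.dotProduct_mulVec_nonneg ![z, w]
    rw [Complex.le_def] at h
    have e : star (![z, w]) ⬝ᵥ Q *ᵥ ![z, w] =
        (starRingEnd ℂ z) * ((a:ℂ) * z + b * w)
        + (starRingEnd ℂ w) * ((starRingEnd ℂ b) * z + (c:ℂ) * w) := by
      simp [mulVec, dotProduct, Fin.sum_univ_two, ha0, hc0, hb0, ← hb_def]

    rw [e] at h
    exact h.1
  have ha : 0 ≤ a := by simpa using key 1 0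
  have hc : 0 ≤ c := by simpa using key 0 1
  have htr2 : a + c ≤ 1 := by
    rw [Matrix.trace_fin_two, ha0, hc0] at htr
    simpa using htr
  rcases eq_or_lt_of_le hc with hcc | hcc
  · -- c = 0
    have hb : b = 0 := by
      have h := key b (((-(a+2)/2 : ℝ)) : ℂ)
      simp only [Complex.add_re, Complex.mul_re, Complex.mul_im, Complex.add_im,
        Complex.ofReal_re, Complex.ofReal_im, Complex.conj_re, Complex.conj_im] at h
      rw [← hcc] at h
      have hsq : Complex.normSq b = 0 := by
        apply le_antisymm _ (Complex.normSq_nonneg b)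
        rw [Complex.normSq_apply]
        nlinarith [h]
      exact Complex.normSq_eq_zero.mp hsq
    have haa : 0 < a := by
      rcases lt_or_eq_of_le ha with h | h
      · exact h
      · exfalso; apply hQ0
        ext i j
        fin_cases i <;> fin_cases j <;>
          simp [ha0, hc0, hb0, ← hb_def, hb, ← h, ← hcc]
    refine ⟨0, ![(Real.sqrt a : ℂ), 0], le_refl 0, by norm_num, ?_, ?_, ?_⟩
    · intro h
      have := congrFun h 0
      simp [Real.sqrt_eq_zero'] at this
      exact absurd this (by push_neg; exact haa)
    · have : (star ![(Real.sqrt a : ℂ), 0] ⬝ᵥ ![(Real.sqrt a : ℂ), 0]) = ((a : ℂ)) := by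
        simp [dotProduct, Fin.sum_univ_two, ← Complex.ofReal_mul, Real.mul_self_sqrt ha]
      rw [this]
      simpa using le_trans (by linarith : a ≤ a + c) htr2
    · ext i j
      fin_cases i <;> fin_cases j <;>
        simp [ha0, hc0, hb0, ← hb_def, hb, ← hcc, vecMulVec_apply, ← Complex.ofReal_mul,
          Real.mul_self_sqrt ha, -cons_vecMulVec]
  · -- c > 0
    have hdet : Complex.normSq b ≤ a * c := by
      have h := key ((c : ℝ) : ℂ) (-(starRingEnd ℂ b))
      simp only [Complex.add_re, Complex.mul_re, Complex.mul_im, Complex.add_im,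
        Complex.neg_re, Complex.neg_im, Complex.ofReal_re, Complex.ofReal_im,
        Complex.conj_re, Complex.conj_im] at h
      rw [Complex.normSq_apply]
      nlinarith [h, hcc]
    set N := Complex.normSq b with hN_def
    have hN : 0 ≤ N := Complex.normSq_nonneg b
    set x := a - N / c with hx_def
    have hx0 : 0 ≤ x := by
      rw [hx_def, sub_nonneg]
      exact (div_le_iff₀ hcc).mpr (by linarith)
    have hxa : x ≤ a := by
      rw [hx_def]
      exact sub_le_self a (by positivity)
    have hx1 : x < 1 := by linarith
    have h1x : 0 < 1 - x := by linarith
    set s := Real.sqrt c with hs_def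
    set t := Real.sqrt (1 - x) with ht_def
    have hs : 0 < s := Real.sqrt_pos.mpr hcc
    have ht : 0 < t := Real.sqrt_pos.mpr h1x
    have hs2 : s * s = c := Real.mul_self_sqrt hcc.le
    have ht2 : t * t = 1 - x := Real.mul_self_sqrt h1x.le
    have hsC : ((s : ℂ)) ≠ 0 := by exact_mod_cast hs.ne'
    have htC : ((t : ℂ)) ≠ 0 := by exact_mod_cast ht.ne'
    have hcC : ((c : ℂ)) ≠ 0 := by exact_mod_cast hcc.ne'
    have hs2C : ((s : ℂ)) * s = (c : ℂ) := by exact_mod_cast hs2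
    have ht2C : ((t : ℂ)) * t = ((1 - x : ℝ) : ℂ) := by exact_mod_cast ht2
    have hbb : (starRingEnd ℂ) b * b = (N : ℂ) := by rw [mul_comm]; exact Complex.mul_conj b
    have h1xC : ((1 - x : ℝ) : ℂ) ≠ 0 := by exact_mod_cast h1x.ne'
    refine ⟨x, ![b / ((s : ℂ) * t), (s : ℂ) / t], hx0, hx1, ?_, ?_, ?_⟩
    · intro h
      have h1 := congrFun h 1
      simp [div_eq_zero_iff, Complex.ofReal_eq_zero, hs.ne', ht.ne'] at h1
    · have he : (star ![b / ((s : ℂ) * t), (s : ℂ) / t] ⬝ᵥ ![b / ((s : ℂ) * t), (s : ℂ) / t])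
          = ((N / (c * (1 - x)) + c / (1 - x) : ℝ) : ℂ) := by
        simp [dotProduct, Fin.sum_univ_two, Complex.conj_ofReal]
        have ht2C' : ((t : ℂ)) * t = 1 - (x : ℂ) := by push_cast at ht2C; exact ht2C
        rw [← hs2C, ← ht2C']
        linear_combination (((s:ℂ) * s * ((t:ℂ) * t))⁻¹) * hbb
      rw [he, Complex.ofReal_re]
      have hcomb : N / (c * (1 - x)) + c / (1 - x) = (N / c + c) / (1 - x) := by
        field_simp
      rw [hcomb, div_le_one h1x]
      have h1x' : 1 - x = 1 - a + N / c := by rw [hx_def]; ring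
      linarith [h1x', (by linarith : a + c ≤ 1)]
    · ext i j
      fin_cases i <;> fin_cases j <;>
        simp only [Fin.mk_zero, Fin.mk_one, Fin.isValue, ha0, hc0, hb0, ← hb_def, Matrix.add_apply, Matrix.smul_apply,
          vecMulVec_apply, Matrix.cons_val_zero, Matrix.cons_val_one, Matrix.head_cons,
          Matrix.cons_val', Matrix.empty_val', Matrix.cons_val_fin_one, Matrix.head_fin_const,
          Pi.star_apply, star_div₀, star_mul', Complex.star_def, _root_.map_div₀, _root_.map_mul,
          Complex.conj_ofReal, smul_eq_mul, Matrix.of_apply]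
      · rw [mul_one, ← ht2C]
        have e : ((t:ℂ) * t) * (b / ((s:ℂ) * t) * ((starRingEnd ℂ) b / ((s:ℂ) * t)))
            = b * (starRingEnd ℂ) b / ((s:ℂ) * s) := by
          field_simp
        rw [e, Complex.mul_conj, hs2C]
        rw [hx_def]
        push_cast
        ring
      · rw [← ht2C]
        field_simp
        ring
      · rw [← ht2C]
        field_simp
        ring
      · rw [← ht2C, ← hs2C]
        field_simp
        ring
end

section
/- Let S_R, S_E be n×n Hermitian positive semidefinite matrices. The supremum of log det(I + Q S_R) − log det(I + Q S_E) over Hermitian Q ⪰ 0 with Tr(Q) ≤ 1 is strictly positive if and only if S_R − S_E has at least one positive eigenvalue. -/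
open Matrix
open scoped ComplexOrder

-- eigenvalues of 1 + P are ≥ 1
lemma aux_eig {n : ℕ} {P : Matrix (Fin n) (Fin n) ℂ} (hP : P.PosSemidef)
    (h1 : (1 + P).IsHermitian) (i : Fin n) : 1 ≤ h1.eigenvalues i := by
  rw [h1.eigenvalues_eq]
  set v := (h1.eigenvectorBasis i : EuclideanSpace ℂ (Fin n))
  have hv1 : dotProduct (star ⇑v) ⇑v = 1 := by
    have := EuclideanSpace.inner_eq_star_dotProduct v v
    rw [inner_self_eq_norm_sq_to_K, h1.eigenvectorBasis.orthonormal.1 i] at this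
    rw [dotProduct_comm]; simpa using this.symm
  rw [add_mulVec, one_mulVec, dotProduct_add, map_add, hv1, RCLike.one_re]
  linarith [hP.re_dotProduct_nonneg ⇑v]

lemma aux_det {n : ℕ} {P : Matrix (Fin n) (Fin n) ℂ} (hP : P.PosSemidef) :
    ∃ r : ℝ, (1 + P).det = (r : ℂ) ∧ 1 ≤ r := by
  have h1 : (1 + P).IsHermitian := (Matrix.PosSemidef.one.add hP).isHermitian
  refine ⟨∏ i, h1.eigenvalues i, ?_, ?_⟩
  · rw [h1.det_eq_prod_eigenvalues, Complex.ofReal_prod]; rfl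
  · calc (1:ℝ) = ∏ _i : Fin n, 1 := by simp
      _ ≤ ∏ i, h1.eigenvalues i :=
        Finset.prod_le_prod (fun i _ => zero_le_one) (fun i _ => aux_eig hP h1 i)

open scoped MatrixOrder in
noncomputable def Matrix.PosSemidef.sqrt {n : ℕ} {Q : Matrix (Fin n) (Fin n) ℂ}
    (_hQ : Q.PosSemidef) : Matrix (Fin n) (Fin n) ℂ := CFC.sqrt Q

open scoped MatrixOrder in
lemma Matrix.PosSemidef.sqrt_mul_self {n : ℕ} {Q : Matrix (Fin n) (Fin n) ℂ}
    (hQ : Q.PosSemidef) : hQ.sqrt * hQ.sqrt = Q := CFC.sqrt_mul_sqrt_self Q hQ.nonneg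

open scoped MatrixOrder in
lemma Matrix.PosSemidef.posSemidef_sqrt {n : ℕ} {Q : Matrix (Fin n) (Fin n) ℂ}
    (hQ : Q.PosSemidef) : hQ.sqrt.PosSemidef := (CFC.sqrt_nonneg Q).posSemidef

lemma sqrt_det_eq {n : ℕ} {Q : Matrix (Fin n) (Fin n) ℂ} (hQ : Q.PosSemidef)
    (S : Matrix (Fin n) (Fin n) ℂ) :
    (1 + Q * S).det = (1 + hQ.sqrt * S * hQ.sqrt).det := by
  calc (1 + Q * S).det = (1 + hQ.sqrt * (hQ.sqrt * S)).det := by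
        rw [← mul_assoc, hQ.sqrt_mul_self]
    _ = (1 + (hQ.sqrt * S) * hQ.sqrt).det := by rw [det_one_add_mul_comm]
    _ = (1 + hQ.sqrt * S * hQ.sqrt).det := by rw [mul_assoc]

lemma conj_psd {n : ℕ} {Q S : Matrix (Fin n) (Fin n) ℂ} (hQ : Q.PosSemidef)
    (hS : S.PosSemidef) : (hQ.sqrt * S * hQ.sqrt).PosSemidef := by
  have := hS.mul_mul_conjTranspose_same hQ.sqrt
  rwa [hQ.posSemidef_sqrt.isHermitian.eq] at this

lemma key1 {n : ℕ} {Q S : Matrix (Fin n) (Fin n) ℂ} (hQ : Q.PosSemidef) (hS : S.PosSemidef) :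
    ∃ r : ℝ, (1 + Q * S).det = (r : ℂ) ∧ 1 ≤ r := by
  rw [sqrt_det_eq hQ]; exact aux_det (conj_psd hQ hS)

lemma key2 {n : ℕ} {Q A B : Matrix (Fin n) (Fin n) ℂ} (hQ : Q.PosSemidef)
    (hA : A.PosSemidef) (hBA : (B - A).PosSemidef) :
    (1 + Q * A).det.re ≤ (1 + Q * B).det.re := by
  obtain ⟨rA, hrA, hrA1⟩ := key1 hQ hA
  set s := hQ.sqrt with hs
  have hPA : (s * A * s).PosSemidef := conj_psd hQ hA
  have hD : (s * (B - A) * s).PosSemidef := conj_psd hQ hBA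
  have hM : (1 + s * A * s).PosDef := Matrix.PosDef.one.add_posSemidef hPA
  set M := 1 + s * A * s with hMdef
  have hMu : IsUnit M.det := hM.det_pos.ne'.isUnit
  have e1 : 1 + s * B * s = M * (1 + M⁻¹ * (s * (B - A) * s)) := by
    rw [mul_add, mul_one, ← mul_assoc, Matrix.mul_nonsing_inv _ hMu, one_mul, hMdef]
    noncomm_ring
  obtain ⟨t, ht, ht1⟩ := key1 hM.inv.posSemidef hD
  have hMdet : M.det = (rA : ℂ) := by rw [hMdef, ← sqrt_det_eq hQ]; exact hrA
  have hdet : (1 + Q * B).det = ((rA * t : ℝ) : ℂ) := by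
    rw [sqrt_det_eq hQ, ← hs, e1, det_mul, ht, hMdet]
    push_cast; ring
  rw [hdet, hrA]
  simp only [Complex.ofReal_re]
  nlinarith

lemma diag_re_nonneg {n : ℕ} {Q : Matrix (Fin n) (Fin n) ℂ} (hQ : Q.PosSemidef) (i : Fin n) :
    0 ≤ (Q i i).re := by
  have h := hQ.re_dotProduct_nonneg (Pi.single i 1)
  simpa [dotProduct, mulVec, Pi.single_apply] using h

lemma diag_re_le_one {n : ℕ} {Q : Matrix (Fin n) (Fin n) ℂ} (hQ : Q.PosSemidef)
    (htr : Q.trace.re ≤ 1) (i : Fin n) : (Q i i).re ≤ 1 := by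
  have h : (Q i i).re ≤ Q.trace.re := by
    rw [Matrix.trace, Complex.re_sum]
    exact Finset.single_le_sum (fun j _ => diag_re_nonneg hQ j) (Finset.mem_univ i)
  linarith

lemma abs_entry_le_one {n : ℕ} {Q : Matrix (Fin n) (Fin n) ℂ} (hQ : Q.PosSemidef)
    (htr : Q.trace.re ≤ 1) (i j : Fin n) : ‖Q i j‖ ≤ 1 := by
  obtain ⟨B, hB⟩ : ∃ B, Q = Bᴴ * B :=
    ⟨hQ.sqrt, by rw [hQ.posSemidef_sqrt.isHermitian.eq, hQ.sqrt_mul_self]⟩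
  set w : Fin n → EuclideanSpace ℂ (Fin n) := fun a => WithLp.toLp 2 (fun k => B k a) with hw
  have hQij : ∀ a b : Fin n, Q a b = (inner ℂ (w a) (w b) : ℂ) := by
    intro a b
    rw [hB]
    simp [Matrix.mul_apply, conjTranspose_apply, PiLp.inner_apply, RCLike.inner_apply, hw,
      mul_comm]
  have hn : ∀ a : Fin n, ‖w a‖ ≤ 1 := by
    intro a
    have h1 : ‖w a‖ ^ 2 = (Q a a).re := by
      rw [← inner_self_eq_norm_sq (𝕜 := ℂ) (w a), hQij a a]; rfl
    nlinarith [norm_nonneg (w a), diag_re_le_one hQ htr a]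
  calc ‖Q i j‖ = ‖(inner ℂ (w i) (w j) : ℂ)‖ := by rw [hQij i j]
    _ ≤ ‖w i‖ * ‖w j‖ := norm_inner_le_norm (w i) (w j)
    _ ≤ 1 * 1 := mul_le_mul (hn i) (hn j) (norm_nonneg (w j)) zero_le_one
    _ = 1 := by ring

lemma det_bound {n : ℕ} {Q S : Matrix (Fin n) (Fin n) ℂ} (hQ : Q.PosSemidef)
    (htr : Q.trace.re ≤ 1) :
    (1 + Q * S).det.re ≤ (n.factorial : ℝ) *
      (1 + ∑ k, ∑ l, ‖S k l‖) ^ n := by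
  set K : ℝ := 1 + ∑ k, ∑ l, ‖S k l‖ with hK
  have hent : ∀ i j, ‖(1 + Q * S) i j‖ ≤ K := by
    intro i j
    have h1 : ‖(1 : Matrix (Fin n) (Fin n) ℂ) i j‖ ≤ 1 := by
      rw [Matrix.one_apply]
      split <;> simp
    have h2 : ‖(Q * S) i j‖ ≤ ∑ k, ∑ l, ‖S k l‖ := by
      rw [Matrix.mul_apply]
      refine le_trans (norm_sum_le _ _) ?_
      refine Finset.sum_le_sum fun k _ => ?_
      rw [norm_mul]
      calc ‖Q i k‖ * ‖S k j‖
          ≤ 1 * ‖S k j‖ :=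
            mul_le_mul_of_nonneg_right (abs_entry_le_one hQ htr i k) (norm_nonneg _)
        _ = ‖S k j‖ := one_mul _
        _ ≤ ∑ l, ‖S k l‖ :=
            Finset.single_le_sum (fun l _ => norm_nonneg _) (Finset.mem_univ j)
    calc ‖(1 + Q * S) i j‖
        ≤ ‖(1 : Matrix (Fin n) (Fin n) ℂ) i j‖ + ‖(Q * S) i j‖ := by
          rw [Matrix.add_apply]; exact norm_add_le _ _
      _ ≤ K := by rw [hK]; linarith
  calc (1 + Q * S).det.re ≤ ‖(1 + Q * S).det‖ := Complex.re_le_norm _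
    _ ≤ (Fintype.card (Fin n)).factorial • K ^ (Fintype.card (Fin n)) :=
        Matrix.det_le (abv := NormedField.toAbsoluteValue ℂ) hent
    _ = (n.factorial : ℝ) * K ^ n := by simp [Fintype.card_fin, nsmul_eq_mul]

lemma rank_one_psd {n : ℕ} (v : Fin n → ℂ) : (vecMulVec v (star v)).PosSemidef := by
  rw [vecMulVec_eq Unit, ← conjTranspose_replicateCol]
  exact posSemidef_self_mul_conjTranspose _

lemma rank_one_det {n : ℕ} (v : Fin n → ℂ) (S : Matrix (Fin n) (Fin n) ℂ) :
    (1 + vecMulVec v (star v) * S).det = 1 + star v ⬝ᵥ (S *ᵥ v) := by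
  rw [vecMulVec_eq Unit, Matrix.mul_assoc, ← replicateRow_vecMul, det_one_add_replicateCol_mul_replicateRow, ← dotProduct_mulVec]

lemma neg_psd {n : ℕ} {D : Matrix (Fin n) (Fin n) ℂ} (hD : D.IsHermitian)
    (h : ∀ i, hD.eigenvalues i ≤ 0) : (-D).PosSemidef := by
  have hfun : diagonal (RCLike.ofReal ∘ fun i => -hD.eigenvalues i : Fin n → ℂ)
      = -diagonal (RCLike.ofReal ∘ hD.eigenvalues) := by
    ext a b
    by_cases hab : a = b <;> simp [diagonal, hab]
  have e : -D = (hD.eigenvectorUnitary : Matrix (Fin n) (Fin n) ℂ) *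
      diagonal (RCLike.ofReal ∘ fun i => -hD.eigenvalues i) *
      (star (hD.eigenvectorUnitary : Matrix (Fin n) (Fin n) ℂ)) := by
    conv_lhs => rw [hD.spectral_theorem]
    rw [hfun, Matrix.mul_neg, Matrix.neg_mul, Unitary.conjStarAlgAut_apply]
  rw [e]
  refine (posSemidef_diagonal_iff.mpr ?_).mul_mul_conjTranspose_same _
  intro i
  simpa using Complex.zero_le_real.mpr (show (0:ℝ) ≤ -hD.eigenvalues i by linarith [h i])


theorem stmt_6 {n : ℕ} (S_R S_E : Matrix (Fin n) (Fin n) ℂ)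
    (hR : S_R.PosSemidef) (hE : S_E.PosSemidef) :
    0 < sSup {c : ℝ | ∃ Q : Matrix (Fin n) (Fin n) ℂ, Q.PosSemidef ∧ Q.trace.re ≤ 1 ∧
          c = Real.log ((1 + Q * S_R).det.re) - Real.log ((1 + Q * S_E).det.re)}
      ↔ ∃ i, 0 < (hR.isHermitian.sub hE.isHermitian).eigenvalues i := by
  set s : Set ℝ := {c : ℝ | ∃ Q : Matrix (Fin n) (Fin n) ℂ, Q.PosSemidef ∧ Q.trace.re ≤ 1 ∧
          c = Real.log ((1 + Q * S_R).det.re) - Real.log ((1 + Q * S_E).det.re)} with hs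
  have hBdd : BddAbove s := by
    refine ⟨(n.factorial : ℝ) * (1 + ∑ k, ∑ l, ‖S_R k l‖) ^ n, ?_⟩
    rintro c ⟨Q, hQ, htr, rfl⟩
    obtain ⟨rR, hrR, hrR1⟩ := key1 hQ hR
    obtain ⟨rE, hrE, hrE1⟩ := key1 hQ hE
    have haR : (1 + Q * S_R).det.re = rR := by rw [hrR]; simp
    have haE : (1 + Q * S_E).det.re = rE := by rw [hrE]; simp
    have hlogE : 0 ≤ Real.log ((1 + Q * S_E).det.re) := by
      rw [haE]; exact Real.log_nonneg hrE1
    have hb := det_bound (S := S_R) hQ htr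
    have hlog := Real.log_le_sub_one_of_pos (show (0:ℝ) < (1 + Q * S_R).det.re by
      rw [haR]; linarith)
    linarith
  constructor
  · intro hsup
    by_contra hno
    push_neg at hno
    have hPSD : (S_E - S_R).PosSemidef := by
      have := neg_psd (hR.isHermitian.sub hE.isHermitian) hno
      rwa [neg_sub] at this
    have hle : sSup s ≤ 0 := by
      refine Real.sSup_le ?_ le_rfl
      rintro c ⟨Q, hQ, htr, rfl⟩
      obtain ⟨rR, hrR, hrR1⟩ := key1 hQ hR
      have haR : (1 + Q * S_R).det.re = rR := by rw [hrR]; simp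
      have hk := key2 hQ hR hPSD
      have hlog : Real.log ((1 + Q * S_R).det.re) ≤ Real.log ((1 + Q * S_E).det.re) :=
        Real.log_le_log (by rw [haR]; linarith) hk
      linarith
    linarith
  · rintro ⟨i, hi⟩
    set hD := hR.isHermitian.sub hE.isHermitian with hDdef
    set v : Fin n → ℂ := ⇑(hD.eigenvectorBasis i) with hv
    have hv1 : dotProduct (star v) v = 1 := by
      have := EuclideanSpace.inner_eq_star_dotProduct (hD.eigenvectorBasis i)
        (hD.eigenvectorBasis i)
      rw [inner_self_eq_norm_sq_to_K, hD.eigenvectorBasis.orthonormal.1 i] at this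
      rw [dotProduct_comm]; simpa using this.symm
    set Q := vecMulVec v (star v) with hQdef
    have hQ : Q.PosSemidef := rank_one_psd v
    have htr : Q.trace.re ≤ 1 := by
      have ht : Q.trace = 1 := by
        rw [hQdef, Matrix.trace]
        rw [← hv1]
        simp only [Matrix.diag_apply, vecMulVec_apply, dotProduct, Pi.star_apply]
        exact Finset.sum_congr rfl fun k _ => mul_comm _ _
      rw [ht]; norm_num
    set aR : ℝ := (dotProduct (star v) (S_R *ᵥ v)).re with haRdef
    set aE : ℝ := (dotProduct (star v) (S_E *ᵥ v)).re with haEdef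
    have haR0 : 0 ≤ aR := hR.re_dotProduct_nonneg v
    have haE0 : 0 ≤ aE := hE.re_dotProduct_nonneg v
    have hlam : hD.eigenvalues i = aR - aE := by
      rw [hD.eigenvalues_eq i]
      rw [sub_mulVec, dotProduct_sub]
      simp [haRdef, haEdef, ← hv]
    have hdR : (1 + Q * S_R).det.re = 1 + aR := by
      rw [hQdef, rank_one_det]; simp [haRdef]
    have hdE : (1 + Q * S_E).det.re = 1 + aE := by
      rw [hQdef, rank_one_det]; simp [haEdef]
    have hmem : Real.log (1 + aR) - Real.log (1 + aE) ∈ s := by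
      exact ⟨Q, hQ, htr, by rw [hdR, hdE]⟩
    have hpos : 0 < Real.log (1 + aR) - Real.log (1 + aE) := by
      have := Real.log_lt_log (show (0:ℝ) < 1 + aE by linarith)
        (show 1 + aE < 1 + aR by rw [hlam] at hi; linarith)
      linarith
    exact lt_of_lt_of_le hpos (le_csSup hBdd hmem)
end

section
/- Let S be the 2×2 Hermitian matrix [[a, b],[b̄, c]] with a, c ≥ 0 and ac ≥ |b|², let e₁ = [1,0]ᵀ, e₂ = [0,1]ᵀ, and let Q = x e₁e₁† + (1−x) uu† with 0 ≤ x < 1 and u ∈ ℂ². Then det(I + QS) = 1 + x·a + (1−x)·u†(S + x·det(S)·e₂e₂†)u. -/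
open Matrix

theorem stmt_13 (a c x : ℝ) (b : ℂ) (u : Fin 2 → ℂ)
    (ha : 0 ≤ a) (hc : 0 ≤ c) (hb : Complex.normSq b ≤ a * c)
    (hx0 : 0 ≤ x) (hx1 : x < 1) :
    (1 + ((x : ℂ) • !![1, 0; 0, 0] + ((1 - x : ℝ) : ℂ) • vecMulVec u (star u))
        * !![(a : ℂ), b; star b, (c : ℂ)]).det
      = 1 + (x : ℂ) * (a : ℂ)
          + ((1 - x : ℝ) : ℂ) *
            (star u ⬝ᵥ (!![(a : ℂ), b; star b, (c : ℂ)]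
              + ((x : ℂ) * !![(a : ℂ), b; star b, (c : ℂ)].det) • !![0, 0; 0, 1]) *ᵥ u) := by
  simp [det_fin_two, Matrix.mul_apply, Matrix.add_apply, Matrix.one_apply, vecMulVec_apply,
    dotProduct, mulVec, Fin.sum_univ_two, Pi.star_apply]
  ring
end

section
/- If S_R − S_E ⪯ 0 (i.e., S_R − S_E has no positive eigenvalue), then for every Hermitian Q ⪰ 0, log det(I + QS_R) − log det(I + QS_E) ≤ 0. -/
open Matrix
open scoped ComplexOrder
open scoped MatrixOrder

/-- For a PSD matrix `P`, `det (1 + P)` is a real number `≥ 1`. -/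
lemma det_one_add_psd {m : ℕ} {P : Matrix (Fin m) (Fin m) ℂ} (hP : P.PosSemidef) :
    ∃ r : ℝ, 1 ≤ r ∧ (1 + P).det = (r : ℂ) := by
  classical
  set U : Matrix (Fin m) (Fin m) ℂ := (hP.1.eigenvectorUnitary : Matrix (Fin m) (Fin m) ℂ)
  have hU : U * star U = 1 := (Matrix.mem_unitaryGroup_iff).mp hP.1.eigenvectorUnitary.2
  have hU1 : U.det * (star U).det = 1 := by rw [← det_mul, hU, det_one]
  have hspec := hP.1.spectral_theorem
  have key : 1 + P = U * (1 + diagonal (RCLike.ofReal ∘ hP.1.eigenvalues)) * star U := by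
    rw [mul_add, add_mul, mul_one, hU]; conv_lhs => rw [hspec]
    rfl
  refine ⟨∏ i, (1 + hP.1.eigenvalues i), ?_, ?_⟩
  · have h := Finset.prod_le_prod (f := fun _ : Fin m => (1:ℝ))
      (g := fun i => 1 + hP.1.eigenvalues i) (s := Finset.univ)
      (fun i _ => zero_le_one) (fun i _ => by simpa using hP.eigenvalues_nonneg i)
    simpa using h
  · have : (1 : Matrix (Fin m) (Fin m) ℂ) + diagonal (RCLike.ofReal ∘ hP.1.eigenvalues)
        = diagonal (fun i => 1 + (hP.1.eigenvalues i : ℂ)) := by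
      rw [← diagonal_one, diagonal_add]
      rfl
    rw [key, this, det_mul, det_mul, det_diagonal, mul_right_comm, hU1, one_mul]
    push_cast
    rfl

/-- Monotonicity of `det (1 + ·)` with respect to the Loewner order on PSD matrices. -/
lemma det_one_add_le_det_one_add {m : ℕ} {M N : Matrix (Fin m) (Fin m) ℂ}
    (hM : M.PosSemidef) (hN : N.PosSemidef) (hMN : (N - M).PosSemidef) :
    (1 + M).det.re ≤ (1 + N).det.re ∧ 1 ≤ (1 + M).det.re := by
  classical
  have hA : (1 + M).PosDef := Matrix.PosDef.one.add_posSemidef hM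
  set B : Matrix (Fin m) (Fin m) ℂ := CFC.sqrt (1 + M) with hBdef
  have hBsq : B * B = 1 + M := CFC.sqrt_mul_sqrt_self (1 + M) hA.posSemidef.nonneg
  have hBpsd : B.PosSemidef := (CFC.sqrt_nonneg (1 + M)).posSemidef
  have hdetB : IsUnit B.det := by
    have : B.det * B.det = (1 + M).det := by rw [← det_mul, hBsq]
    have h0 : (1 + M).det ≠ 0 := hA.det_pos.ne'
    exact isUnit_iff_ne_zero.mpr fun h => h0 (by rw [← this, h, mul_zero])
  have hBinv : B * B⁻¹ = 1 := mul_nonsing_inv B hdetB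
  have hBinv' : B⁻¹ * B = 1 := nonsing_inv_mul B hdetB
  have hBinvH : B⁻¹ᴴ = B⁻¹ := (hBpsd.1.inv).symm ▸ rfl
  have hC : (B⁻¹ * (N - M) * B⁻¹).PosSemidef := by
    have := hMN.mul_mul_conjTranspose_same B⁻¹
    rwa [hBinvH] at this
  have key : 1 + N = B * (1 + B⁻¹ * (N - M) * B⁻¹) * B := by
    rw [mul_add, mul_one, add_mul, hBsq]
    have : B * (B⁻¹ * (N - M) * B⁻¹) * B = N - M := by
      rw [← mul_assoc, ← mul_assoc, hBinv, one_mul, mul_assoc, hBinv', mul_one]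
    rw [this]
    abel
  obtain ⟨r₁, hr₁, hdet₁⟩ := det_one_add_psd hM
  obtain ⟨r₂, hr₂, hdet₂⟩ := det_one_add_psd hC
  have hdetN : (1 + N).det = ((r₁ * r₂ : ℝ) : ℂ) := by
    rw [key, det_mul, det_mul, mul_comm, ← mul_assoc, ← det_mul, hBsq, hdet₁, hdet₂]
    push_cast
    ring
  rw [hdet₁, hdetN]
  simp only [Complex.ofReal_re]
  exact ⟨le_mul_of_one_le_right (by linarith) hr₂, hr₁⟩

theorem stmt_17 {n : ℕ} (S_R S_E : Matrix (Fin n) (Fin n) ℂ)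
    (hR : S_R.PosSemidef) (hE : S_E.PosSemidef)
    (hle : (S_E - S_R).PosSemidef) :
    ∀ Q : Matrix (Fin n) (Fin n) ℂ, Q.PosSemidef →
      Real.log ((1 + Q * S_R).det.re) - Real.log ((1 + Q * S_E).det.re) ≤ 0 := by
  intro Q hQ
  classical
  set s : Matrix (Fin n) (Fin n) ℂ := CFC.sqrt Q with hsdef
  have hs : s * s = Q := CFC.sqrt_mul_sqrt_self Q hQ.nonneg
  have hspsd : s.PosSemidef := (CFC.sqrt_nonneg Q).posSemidef
  have hsH : sᴴ = s := hspsd.1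
  have hdet : ∀ S : Matrix (Fin n) (Fin n) ℂ, (1 + Q * S).det = (1 + s * S * s).det := by
    intro S
    rw [← hs, mul_assoc, det_one_add_mul_comm, mul_assoc]
  have hMR : (s * S_R * s).PosSemidef := by
    have := hR.mul_mul_conjTranspose_same s; rwa [hsH] at this
  have hME : (s * S_E * s).PosSemidef := by
    have := hE.mul_mul_conjTranspose_same s; rwa [hsH] at this
  have hsub : (s * S_E * s - s * S_R * s).PosSemidef := by
    have := hle.mul_mul_conjTranspose_same s
    rwa [hsH, mul_sub, sub_mul] at this
  obtain ⟨hle', hge1⟩ := det_one_add_le_det_one_add hMR hME hsub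
  rw [hdet S_R, hdet S_E]
  have h1 : (0:ℝ) < (1 + s * S_R * s).det.re := lt_of_lt_of_le one_pos hge1
  have := Real.log_le_log h1 hle'
  linarith
end

section
/- For 2×2 Hermitian PSD matrices S_R, S_E with entries a₁, b₁, c₁ and a₂, b₂, c₂ respectively, define f₁(x) = p₁x² + p₂x + p₃, f₂(x) = q₁x² + q₂x + q₃, f₃(x) = q₄x² + q₅x + q₆ with coefficients p₁ = −b₁*b₂ − b₁b₂* − (1+a₁)(a₂c₂−|b₂|²) − (1+a₂)(a₁c₁−|b₁|²), p₂ = 2b₁*b₂ + 2b₁b₂* + (1+a₁)(a₂−c₂+a₂c₂−|b₂|²) + (1+a₂)(a₁−c₁+a₁c₁−|b₁|²), p₃ = (1+a₁)(1+c₂) + (1+a₂)(1+c₁) − b₁*b₂ − b₁b₂*, q₁ = −a₂(c₂+a₂c₂−|b₂|²), q₂ = a₂−c₂+a₂²+|b₂|²+a₂(a₂c₂−|b₂|²), q₃ = 1+a₂+c₂+a₂c₂−|b₂|², and q₄, q₅, q₆ analogously with subscript 1. Then Tr(G₂(x)⁻¹G₁(x)) = f₁(x)/f₂(x) and det(G₂(x)⁻¹G₁(x))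 = f₃(x)/f₂(x), where G₁(x) = (1+xa₁)I + (1−x)(S_R + x det(S_R)e₂e₂†) and G₂(x) = (1+xa₂)I + (1−x)(S_E + x det(S_E)e₂e₂†). -/
open Matrix

theorem stmt_18 (a₁ c₁ a₂ c₂ x : ℝ) (b₁ b₂ : ℂ)
    (ha₁ : 0 ≤ a₁) (hc₁ : 0 ≤ c₁) (hb₁ : Complex.normSq b₁ ≤ a₁ * c₁)
    (ha₂ : 0 ≤ a₂) (hc₂ : 0 ≤ c₂) (hb₂ : Complex.normSq b₂ ≤ a₂ * c₂)
    (hx : x ∈ Set.Ico (0:ℝ) 1) :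
    let S_R : Matrix (Fin 2) (Fin 2) ℂ := !![(a₁ : ℂ), b₁; star b₁, (c₁ : ℂ)]
    let S_E : Matrix (Fin 2) (Fin 2) ℂ := !![(a₂ : ℂ), b₂; star b₂, (c₂ : ℂ)]
    let G₁ : Matrix (Fin 2) (Fin 2) ℂ :=
      (1 + (x : ℂ) * a₁) • 1 + ((1 - x : ℝ) : ℂ) • (S_R + ((x : ℂ) * S_R.det) • !![0, 0; 0, 1])
    let G₂ : Matrix (Fin 2) (Fin 2) ℂ :=
      (1 + (x : ℂ) * a₂) • 1 + ((1 - x : ℝ) : ℂ) • (S_E + ((x : ℂ) * S_E.det) • !![0, 0; 0, 1])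
    let p₁ : ℝ := -(2 * ((starRingEnd ℂ) b₁ * b₂).re)
      - (1 + a₁) * (a₂ * c₂ - Complex.normSq b₂) - (1 + a₂) * (a₁ * c₁ - Complex.normSq b₁)
    let p₂ : ℝ := 2 * (2 * ((starRingEnd ℂ) b₁ * b₂).re)
      + (1 + a₁) * (a₂ - c₂ + a₂ * c₂ - Complex.normSq b₂)
      + (1 + a₂) * (a₁ - c₁ + a₁ * c₁ - Complex.normSq b₁)
    let p₃ : ℝ := (1 + a₁) * (1 + c₂) + (1 + a₂) * (1 + c₁) - 2 * ((starRingEnd ℂ) b₁ * b₂).re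
    let q₁ : ℝ := -a₂ * (c₂ + a₂ * c₂ - Complex.normSq b₂)
    let q₂ : ℝ := a₂ - c₂ + a₂ ^ 2 + Complex.normSq b₂ + a₂ * (a₂ * c₂ - Complex.normSq b₂)
    let q₃ : ℝ := 1 + a₂ + c₂ + a₂ * c₂ - Complex.normSq b₂
    let q₄ : ℝ := -a₁ * (c₁ + a₁ * c₁ - Complex.normSq b₁)
    let q₅ : ℝ := a₁ - c₁ + a₁ ^ 2 + Complex.normSq b₁ + a₁ * (a₁ * c₁ - Complex.normSq b₁)
    let q₆ : ℝ := 1 + a₁ + c₁ + a₁ * c₁ - Complex.normSq b₁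
    let f₁ : ℝ := p₁ * x ^ 2 + p₂ * x + p₃
    let f₂ : ℝ := q₁ * x ^ 2 + q₂ * x + q₃
    let f₃ : ℝ := q₄ * x ^ 2 + q₅ * x + q₆
    (G₂⁻¹ * G₁).trace = ((f₁ / f₂ : ℝ) : ℂ) ∧ (G₂⁻¹ * G₁).det = ((f₃ / f₂ : ℝ) : ℂ) := by
  obtain ⟨hx0, hx1⟩ := hx
  intro S_R S_E G₁ G₂ p₁ p₂ p₃ q₁ q₂ q₃ q₄ q₅ q₆ f₁ f₂ f₃
  have hb₁c : b₁ * (starRingEnd ℂ) b₁ = ((Complex.normSq b₁ : ℝ) : ℂ) := Complex.mul_conj b₁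
  have hb₂c : b₂ * (starRingEnd ℂ) b₂ = ((Complex.normSq b₂ : ℝ) : ℂ) := Complex.mul_conj b₂
  have hmix : (starRingEnd ℂ) b₁ * b₂ + b₁ * (starRingEnd ℂ) b₂
      = 2 * ((((starRingEnd ℂ) b₁ * b₂).re : ℝ) : ℂ) := by
    have h := Complex.add_conj ((starRingEnd ℂ) b₁ * b₂)
    simp only [RingHom.map_mul, Complex.conj_conj] at h
    rw [h]; push_cast; ring
  have hG₁ : G₁ = !![(1 : ℂ) + x * a₁ + (1 - x) * a₁, (1 - x) * b₁;
      (1 - x) * (starRingEnd ℂ) b₁,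
      1 + x * a₁ + (1 - x) * (c₁ + x * ((a₁ : ℂ) * c₁ - (Complex.normSq b₁ : ℝ)))] := by
    unfold G₁ S_R
    ext i j
    fin_cases i <;> fin_cases j <;>
      simp [Matrix.det_fin_two_of, Complex.star_def, hb₁c] <;> push_cast <;> ring_nf <;>
      linear_combination (x : ℂ) * (1 - x) * hb₁c
  have hG₂ : G₂ = !![(1 : ℂ) + x * a₂ + (1 - x) * a₂, (1 - x) * b₂;
      (1 - x) * (starRingEnd ℂ) b₂,
      1 + x * a₂ + (1 - x) * (c₂ + x * ((a₂ : ℂ) * c₂ - (Complex.normSq b₂ : ℝ)))] := by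
    unfold G₂ S_E
    ext i j
    fin_cases i <;> fin_cases j <;>
      simp [Matrix.det_fin_two_of, Complex.star_def, hb₂c] <;> push_cast <;> ring_nf <;>
      linear_combination (x : ℂ) * (1 - x) * hb₂c
  have hn₂ : (0:ℝ) ≤ Complex.normSq b₂ := Complex.normSq_nonneg b₂
  have hf₂pos : (0:ℝ) < f₂ := by
    unfold f₂ q₁ q₂ q₃
    nlinarith [mul_nonneg hx0 ha₂, mul_nonneg (mul_nonneg hx0 (sub_nonneg.2 hx1.le)) (sub_nonneg.2 hb₂),
      mul_nonneg (sub_nonneg.2 hx1.le) (sub_nonneg.2 hb₂),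
      mul_nonneg (mul_nonneg (sub_nonneg.2 hx1.le) hc₂) ha₂,
      mul_nonneg (mul_nonneg (mul_nonneg hx0 (sub_nonneg.2 hx1.le)) (sub_nonneg.2 hb₂)) ha₂,
      mul_nonneg (mul_nonneg hx0 ha₂) ha₂, mul_nonneg hx0 (mul_nonneg ha₂ ha₂),
      mul_nonneg (sub_nonneg.2 hx1.le) hc₂, sq_nonneg (1-x), mul_nonneg hx0 hn₂]
  have hdet₂ : G₂.det = ((f₂ : ℝ) : ℂ) := by
    rw [hG₂, Matrix.det_fin_two_of]
    unfold f₂ q₁ q₂ q₃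
    push_cast
    linear_combination (-(1 - (x:ℂ))^2) * hb₂c
  have hdet₁ : G₁.det = ((f₃ : ℝ) : ℂ) := by
    rw [hG₁, Matrix.det_fin_two_of]
    unfold f₃ q₄ q₅ q₆
    push_cast
    linear_combination (-(1 - (x:ℂ))^2) * hb₁c
  have hdet₂0 : G₂.det ≠ 0 := by
    rw [hdet₂]; exact_mod_cast hf₂pos.ne'
  have hf₂0 : (f₂ : ℝ) ≠ 0 := hf₂pos.ne'
  constructor
  · have hinv : G₂⁻¹ = (G₂.det)⁻¹ • G₂.adjugate := by
      rw [Matrix.inv_def, Ring.inverse_eq_inv']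
    have htr : (G₂.adjugate * G₁).trace = ((f₁ : ℝ) : ℂ) := by
      rw [hG₁, hG₂, Matrix.adjugate_fin_two_of, Matrix.mul_fin_two, Matrix.trace_fin_two_of]
      unfold f₁ p₁ p₂ p₃
      push_cast
      linear_combination (-(1 - (x:ℂ))^2) * hmix
    rw [hinv, Matrix.smul_mul, Matrix.trace_smul, htr, hdet₂, smul_eq_mul,
      inv_mul_eq_div, Complex.ofReal_div]
  · rw [Matrix.det_mul, Matrix.det_nonsing_inv, Ring.inverse_eq_inv', hdet₂, hdet₁,
      inv_mul_eq_div, Complex.ofReal_div]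
end

section
/- Let f₂(x) = q₁x² + q₂x + q₃ with q₁ = −a(c + ac − |b|²), q₂ = a − c + a² + |b|² + a(ac − |b|²), q₃ = 1 + a + c + ac − |b|², where a, c ≥ 0 and ac ≥ |b|². Then f₂(x) = det((1+xa)I + (1−x)(S + x det(S) e₂e₂†)) > 0 for all x ∈ [0,1), where S = [[a,b],[b̄,c]]. -/
open Matrix

theorem stmt_19 (a c x : ℝ) (b : ℂ)
    (ha : 0 ≤ a) (hc : 0 ≤ c) (hb : Complex.normSq b ≤ a * c)
    (hx : x ∈ Set.Ico (0:ℝ) 1) :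
    let S : Matrix (Fin 2) (Fin 2) ℂ := !![(a : ℂ), b; star b, (c : ℂ)]
    let G : Matrix (Fin 2) (Fin 2) ℂ :=
      (1 + (x : ℂ) * a) • 1 + ((1 - x : ℝ) : ℂ) • (S + ((x : ℂ) * S.det) • !![0, 0; 0, 1])
    let q₁ : ℝ := -a * (c + a * c - Complex.normSq b)
    let q₂ : ℝ := a - c + a ^ 2 + Complex.normSq b + a * (a * c - Complex.normSq b)
    let q₃ : ℝ := 1 + a + c + a * c - Complex.normSq b
    G.det = ((q₁ * x ^ 2 + q₂ * x + q₃ : ℝ) : ℂ) ∧ 0 < q₁ * x ^ 2 + q₂ * x + q₃ := by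
  obtain ⟨hx0, hx1⟩ := hx
  intro S G q₁ q₂ q₃
  have hmc : b * (starRingEnd ℂ) b = (Complex.normSq b : ℂ) := Complex.mul_conj b
  have hSdet : S.det = (a : ℂ) * c - (Complex.normSq b : ℂ) := by
    simp [S, Matrix.det_fin_two, Matrix.star_eq_conjTranspose]
    exact hmc
  constructor
  · have h00 : G 0 0 = (1 + (x:ℂ)*a) + ((1-x:ℝ):ℂ) * a := by
      simp [G, S, Matrix.one_apply]
    have h01 : G 0 1 = ((1-x:ℝ):ℂ) * b := by
      simp [G, S, Matrix.one_apply]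
    have h10 : G 1 0 = ((1-x:ℝ):ℂ) * (starRingEnd ℂ) b := by
      simp [G, S, Matrix.one_apply]
    have h11 : G 1 1 = (1 + (x:ℂ)*a) + ((1-x:ℝ):ℂ) * ((c:ℂ) + (x:ℂ) * S.det) := by
      simp [G, S, Matrix.one_apply]
    rw [Matrix.det_fin_two, h00, h01, h10, h11, hSdet]
    have : ((1-x:ℝ):ℂ) * b * (((1-x:ℝ):ℂ) * (starRingEnd ℂ) b)
        = ((1-x:ℝ):ℂ)^2 * (Complex.normSq b : ℂ) := by
      rw [show ((1-x:ℝ):ℂ) * b * (((1-x:ℝ):ℂ) * (starRingEnd ℂ) b)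
          = ((1-x:ℝ):ℂ)^2 * (b * (starRingEnd ℂ) b) by ring, hmc]
    rw [this]
    push_cast [q₁, q₂, q₃]
    ring
  · have hd : 0 ≤ a * c - Complex.normSq b := by linarith
    have hn : 0 ≤ Complex.normSq b := Complex.normSq_nonneg b
    have hu : 0 ≤ 1 - x := by linarith
    show 0 < q₁ * x ^ 2 + q₂ * x + q₃
    simp only [q₁, q₂, q₃]
    nlinarith [mul_nonneg hx0 ha, mul_nonneg hu hc, mul_nonneg (mul_nonneg hx0 hu) hd,
      mul_nonneg hx0 (mul_nonneg ha ha), mul_nonneg (mul_nonneg hx0 hu) hn,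
      mul_nonneg hu hd, mul_nonneg ha (mul_nonneg (mul_nonneg hx0 hu) hd),
      mul_nonneg ha (mul_nonneg hx0 ha), mul_nonneg ha (mul_nonneg hu hd)]
end
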